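/- Let z : ℕ → {0,…,M} be a fixed delay sequence with switch time t_z := min{z_0, 1+z_1, …, (M−1)+z_{M−1}}. For every history-dependent randomized policy π, every initial state s_0 ∈ S with μ(s_0) > 0, and every s ∈ S: P^π_z(s̃_{t_z} = s | s̃_0 = s_0) = ∑_{s_1,…,s_{t_z−1} ∈ S} ∏_{i=0}^{t_z−1} P(s_i, ā_i)(s_{i+1}), where s_{t_z} := s. In particular this conditional law does not depend on π: up to the switch time, the executed actions equal the default actions almost surely and the state distribution is the composition of the transition kernels along the default action queue. -/

import Mathlib

open scoped ENNReal

/-! ## Stochastic execution-delay MDP with a fixed (observed) delay sequence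

`S` and `A` are the finite state and action spaces, `P : S → A → PMF S` is the
transition kernel, `μ : PMF S` the initial distribution, `M ≥ 1` the delay bound,
`abar` the default action queue (only indices `< M` are ever used), and
`z : ℕ → {0,…,M}` a fixed delay sequence.  `P^π_z` denotes the process law with
these deterministic delays. -/

/-- Effective decision time `τ_t(z)`: the largest `t' ≤ t` with `t' + z t' ≤ t`. -/
def tau (z : ℕ → ℕ) (t : ℕ) : ℕ := Nat.findGreatest (fun t' => t' + z t' ≤ t) t

theorem tau_le (z : ℕ → ℕ) (t : ℕ) : tau z t ≤ t := Nat.findGreatest_le t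

/-- Switch time `t_z = min {z 0, 1 + z 1, …, (M-1) + z (M-1)}`. -/
noncomputable def switchTime (M : ℕ) (z : ℕ → ℕ) : ℕ := sInf {x | ∃ t' < M, t' + z t' = x}

/-- A history-dependent randomized policy (for a fixed, observed delay sequence):
at time `t` it maps the history `(s 0, …, s t, a 0, …, a (t-1))` to a distribution
over actions.  It is encoded on whole sequences, together with `IsCausal`. -/
def IsCausal {S A : Type*} (π : ℕ → (ℕ → S) → (ℕ → A) → PMF A) : Prop :=
  ∀ (t : ℕ) (s s' : ℕ → S) (a a' : ℕ → A),
    (∀ i ≤ t, s i = s' i) → (∀ j < t, a j = a' j) → π t s a = π t s' a'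

/-- The probability that the action executed at time `t` is `a t`, given the history:
if `t < min {z 0, 1 + z 1, …, t + z t}` the default action `abar t` is executed
deterministically; otherwise the action is drawn from `π (τ_t) (h (τ_t))`. -/
noncomputable def actProb {S A : Type*} [DecidableEq A] (abar : ℕ → A)
    (π : ℕ → (ℕ → S) → (ℕ → A) → PMF A) (z : ℕ → ℕ)
    (t : ℕ) (s : ℕ → S) (a : ℕ → A) : ℝ≥0∞ :=
  if t < sInf {x | ∃ t' ≤ t, t' + z t' = x} then (if a t = abar t then 1 else 0)
  else π (tau z t) s a (a t)

/-- `P^π_z`-probability of the prefix `(s 0, a 0, …, s t, a t)`. -/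
noncomputable def pathProb {S A : Type*} [DecidableEq A] (P : S → A → PMF S)
    (μ : PMF S) (abar : ℕ → A) (π : ℕ → (ℕ → S) → (ℕ → A) → PMF A) (z : ℕ → ℕ)
    (t : ℕ) (s : ℕ → S) (a : ℕ → A) : ℝ≥0∞ :=
  μ (s 0) * (∏ k ∈ Finset.range (t + 1), actProb abar π z k s a)
    * (∏ k ∈ Finset.range t, P (s k) (a k) (s (k + 1)))

/-- Extension of a finite vector by a default value. -/
def ext {X : Type*} [Inhabited X] {n : ℕ} (v : Fin n → X) : ℕ → X :=
  fun i => if h : i < n then v ⟨i, h⟩ else default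

-- auxiliary lemmas
lemma pmf_sum_eq_one {A : Type*} [Fintype A] (p : PMF A) : ∑ a : A, p a = 1 := by
  rw [← tsum_fintype (L := SummationFilter.unconditional _)]; exact p.tsum_coe

lemma ext_lt {X : Type*} [Inhabited X] {n : ℕ} (v : Fin n → X) {i : ℕ} (h : i < n) :
    ext v i = v ⟨i, h⟩ := dif_pos h

lemma ext_val {X : Type*} [Inhabited X] {n : ℕ} (v : Fin n → X) (i : Fin n) :
    ext v i = v i := by rw [ext_lt v i.isLt]

lemma ext_snoc_lt {X : Type*} [Inhabited X] {n : ℕ} (u : Fin n → X) (a : X) {k : ℕ}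
    (hk : k < n) : ext (Fin.snoc u a) k = ext u k := by
  rw [ext_lt _ (Nat.lt_succ_of_lt hk), ext_lt u hk]
  have h : (⟨k, Nat.lt_succ_of_lt hk⟩ : Fin (n+1)) = Fin.castSucc ⟨k, hk⟩ := by
    ext; simp
  rw [h, Fin.snoc_castSucc]

lemma ext_snoc_last {X : Type*} [Inhabited X] {n : ℕ} (u : Fin n → X) (a : X) :
    ext (Fin.snoc u a) n = a := by
  rw [ext_lt _ (Nat.lt_succ_self n)]
  have h : (⟨n, Nat.lt_succ_self n⟩ : Fin (n+1)) = Fin.last n := rfl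
  rw [h, Fin.snoc_last]

lemma sum_prod_ext {S : Type*} [Fintype S] [DecidableEq S] [Inhabited S] (Q : ℕ → S → PMF S) :
    ∀ (n : ℕ) (s0 : S),
      (∑ v : Fin (n+1) → S, if ext v 0 = s0 then
        ∏ k ∈ Finset.range n, Q k (ext v k) (ext v (k+1)) else 0) = 1 := by
  intro n
  induction n with
  | zero =>
    intro s0
    rw [← Equiv.sum_comp (Equiv.funUnique (Fin 1) S).symm]
    simp [ext]
  | succ n ih =>
    intro s0
    rw [← Equiv.sum_comp (Fin.snocEquiv (fun _ => S)), Fintype.sum_prod_type,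
      Finset.sum_comm]
    have step : ∀ (u : Fin (n+1) → S) (a : S),
        (if ext ((Fin.snocEquiv (fun _ => S)) (a, u)) 0 = s0 then
          ∏ k ∈ Finset.range (n+1),
            Q k (ext ((Fin.snocEquiv (fun _ => S)) (a, u)) k)
              (ext ((Fin.snocEquiv (fun _ => S)) (a, u)) (k+1)) else 0)
        = (if ext u 0 = s0 then
            (∏ k ∈ Finset.range n, Q k (ext u k) (ext u (k+1))) * Q n (ext u n) a
          else 0) := by
      intro u a
      have hsnoc : ((Fin.snocEquiv (fun _ => S)) (a, u) : Fin (n+2) → S) = Fin.snoc u a := by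
        funext i; rfl
      have hprod : (∏ k ∈ Finset.range n,
            Q k (ext (Fin.snoc u a) k) (ext (Fin.snoc u a) (k+1)))
          = ∏ k ∈ Finset.range n, Q k (ext u k) (ext u (k+1)) :=
        Finset.prod_congr rfl fun k hk => by
          have hk' := Finset.mem_range.mp hk
          rw [ext_snoc_lt u a (Nat.lt_succ_of_lt hk'),
            ext_snoc_lt u a (Nat.succ_lt_succ hk')]
      rw [hsnoc, ext_snoc_lt u a (Nat.succ_pos n), Finset.prod_range_succ,
        ext_snoc_lt u a (Nat.lt_succ_self n), ext_snoc_last, hprod]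
    calc (∑ u : Fin (n+1) → S, ∑ a : S,
          if ext ((Fin.snocEquiv (fun _ => S)) (a, u)) 0 = s0 then
            ∏ k ∈ Finset.range (n+1),
              Q k (ext ((Fin.snocEquiv (fun _ => S)) (a, u)) k)
                (ext ((Fin.snocEquiv (fun _ => S)) (a, u)) (k+1)) else 0)
        = ∑ u : Fin (n+1) → S,
            (if ext u 0 = s0 then
              ∏ k ∈ Finset.range n, Q k (ext u k) (ext u (k+1)) else 0) := by
          refine Finset.sum_congr rfl fun u _ => ?_
          rw [Finset.sum_congr rfl fun a _ => step u a]
          by_cases h : ext u 0 = s0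
          · simp only [if_pos h, ← Finset.mul_sum, pmf_sum_eq_one, mul_one]
          · simp [h]
      _ = 1 := ih s0

open Classical in
/-- `P^π_z`-probability of an event `E` on `(s̃ 0, …, s̃ t, ã 0, …, ã t)`. -/
noncomputable def eventProb {S A : Type*} [Fintype S] [Inhabited S] [Fintype A]
    [DecidableEq A] [Inhabited A] (P : S → A → PMF S) (μ : PMF S)
    (abar : ℕ → A) (π : ℕ → (ℕ → S) → (ℕ → A) → PMF A) (z : ℕ → ℕ)
    (t : ℕ) (E : (Fin (t + 1) → S) → (Fin (t + 1) → A) → Prop) : ℝ≥0∞ :=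
  ∑ v : Fin (t + 1) → S, ∑ w : Fin (t + 1) → A,
    if E v w then pathProb P μ abar π z t (ext v) (ext w) else 0

lemma switch_lt {M : ℕ} (hM : 1 ≤ M) (z : ℕ → ℕ) (hz : ∀ i, z i ≤ M) :
    ∀ k, k < switchTime M z → k < sInf {x | ∃ t' ≤ k, t' + z t' = x} := by
  intro k hk
  have hM0 : 0 < M := hM
  have hTleM : switchTime M z ≤ M :=
    le_trans (Nat.sInf_le ⟨0, hM0, zero_add _⟩) (hz 0)
  by_contra h
  push_neg at h
  obtain ⟨t', ht'k, ht'⟩ := Nat.sInf_mem (⟨z 0, 0, Nat.zero_le k, zero_add _⟩ :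
    {x | ∃ t' ≤ k, t' + z t' = x}.Nonempty)
  have hT2 : switchTime M z ≤ t' + z t' := Nat.sInf_le ⟨t', by omega, rfl⟩
  omega

lemma switch_nlt {M : ℕ} (hM : 1 ≤ M) (z : ℕ → ℕ) :
    ¬ (switchTime M z < sInf {x | ∃ t' ≤ switchTime M z, t' + z t' = x}) := by
  have hM0 : 0 < M := hM
  obtain ⟨t0, ht0M, ht0⟩ : ∃ t' < M, t' + z t' = switchTime M z :=
    Nat.sInf_mem (⟨z 0, 0, hM0, zero_add _⟩ :
      {x | ∃ t' < M, t' + z t' = x}.Nonempty)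
  exact not_lt.mpr (Nat.sInf_le ⟨t0, by omega, ht0⟩)

lemma sum_w {S A : Type*} [Fintype S] [Inhabited S] [Fintype A] [DecidableEq A]
    [Inhabited A]
    (P : S → A → PMF S) (μ : PMF S) (abar : ℕ → A) (z : ℕ → ℕ)
    (π : ℕ → (ℕ → S) → (ℕ → A) → PMF A) (hπ : IsCausal π) (T : ℕ)
    (hlt : ∀ k, k < T → k < sInf {x | ∃ t' ≤ k, t' + z t' = x})
    (hnlt : ¬ (T < sInf {x | ∃ t' ≤ T, t' + z t' = x}))
    (v : Fin (T + 1) → S) :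
    (∑ w : Fin (T + 1) → A, pathProb P μ abar π z T (ext v) (ext w))
      = μ (ext v 0) * ∏ k ∈ Finset.range T,
          P (ext v k) (abar k) (ext v (k+1)) := by
  have hpath : ∀ w : Fin (T+1) → A,
      pathProb P μ abar π z T (ext v) (ext w)
        = μ (ext v 0) *
            ((∏ k ∈ Finset.range T, if ext w k = abar k then (1:ℝ≥0∞) else 0)
              * π (tau z T) (ext v) (ext w) (ext w T))
          * ∏ k ∈ Finset.range T, P (ext v k) (ext w k) (ext v (k+1)) := by
    intro w
    have h1 : (∏ k ∈ Finset.range T, actProb abar π z k (ext v) (ext w))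
        = ∏ k ∈ Finset.range T, (if ext w k = abar k then (1:ℝ≥0∞) else 0) :=
      Finset.prod_congr rfl fun k hk => by
        simp only [actProb]
        rw [if_pos (hlt k (Finset.mem_range.mp hk))]
    have h2 : actProb abar π z T (ext v) (ext w)
        = π (tau z T) (ext v) (ext w) (ext w T) := by
      simp only [actProb]
      rw [if_neg hnlt]
    unfold pathProb
    rw [Finset.prod_range_succ, h1, h2]
  rw [Finset.sum_congr rfl fun w _ => hpath w]
  rw [← Equiv.sum_comp (Fin.snocEquiv (fun _ => A)), Fintype.sum_prod_type,
    Finset.sum_comm]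
  have hsnoc : ∀ (u : Fin T → A) (a : A),
      ((Fin.snocEquiv (fun _ => A)) (a, u) : Fin (T+1) → A) = Fin.snoc u a :=
    fun u a => funext fun i => rfl
  simp only [hsnoc]
  have hsummand : ∀ (u : Fin T → A) (a : A),
      (μ (ext v 0) *
          ((∏ k ∈ Finset.range T, if ext (Fin.snoc u a) k = abar k then (1:ℝ≥0∞) else 0)
            * π (tau z T) (ext v) (ext (Fin.snoc u a)) (ext (Fin.snoc u a) T))
        * ∏ k ∈ Finset.range T, P (ext v k) (ext (Fin.snoc u a) k) (ext v (k+1)))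
      = μ (ext v 0) *
          ((∏ k ∈ Finset.range T, if ext u k = abar k then (1:ℝ≥0∞) else 0)
            * π (tau z T) (ext v) (ext (Fin.snoc u a)) a)
        * ∏ k ∈ Finset.range T, P (ext v k) (ext u k) (ext v (k+1)) := by
    intro u a
    have e1 : (∏ k ∈ Finset.range T,
          if ext (Fin.snoc u a) k = abar k then (1:ℝ≥0∞) else 0)
        = ∏ k ∈ Finset.range T, if ext u k = abar k then (1:ℝ≥0∞) else 0 :=
      Finset.prod_congr rfl fun k hk => by
        rw [ext_snoc_lt u a (Finset.mem_range.mp hk)]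
    have e2 : (∏ k ∈ Finset.range T, P (ext v k) (ext (Fin.snoc u a) k) (ext v (k+1)))
        = ∏ k ∈ Finset.range T, P (ext v k) (ext u k) (ext v (k+1)) :=
      Finset.prod_congr rfl fun k hk => by
        rw [ext_snoc_lt u a (Finset.mem_range.mp hk)]
    rw [e1, e2, ext_snoc_last]
  simp only [hsummand]
  have h0 : ∀ u : Fin T → A, u ≠ (fun i : Fin T => abar i) →
      (∑ a : A, μ (ext v 0) *
          ((∏ k ∈ Finset.range T, if ext u k = abar k then (1:ℝ≥0∞) else 0)
            * π (tau z T) (ext v) (ext (Fin.snoc u a)) a)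
        * ∏ k ∈ Finset.range T, P (ext v k) (ext u k) (ext v (k+1))) = 0 := by
    intro u hu
    obtain ⟨i, hi⟩ : ∃ i : Fin T, u i ≠ abar i := by
      by_contra hc; push_neg at hc; exact hu (funext hc)
    have hzero : (∏ k ∈ Finset.range T,
        if ext u k = abar k then (1:ℝ≥0∞) else 0) = 0 :=
      Finset.prod_eq_zero (Finset.mem_range.mpr i.isLt)
        (by rw [ext_val u i]; exact if_neg hi)
    simp [hzero]
  rw [Fintype.sum_eq_single (fun i : Fin T => abar i) h0]
  have hind : (∏ k ∈ Finset.range T,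
      if ext (fun i : Fin T => abar i) k = abar k then (1:ℝ≥0∞) else 0) = 1 := by
    rw [Finset.prod_congr rfl fun k hk => ?_, Finset.prod_const_one]
    rw [ext_lt (fun i : Fin T => abar i) (Finset.mem_range.mp hk)]
    exact if_pos rfl
  have hP : (∏ k ∈ Finset.range T,
        P (ext v k) (ext (fun i : Fin T => abar i) k) (ext v (k+1)))
      = ∏ k ∈ Finset.range T, P (ext v k) (abar k) (ext v (k+1)) :=
    Finset.prod_congr rfl fun k hk => by
      rw [ext_lt (fun i : Fin T => abar i) (Finset.mem_range.mp hk)]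
  have hq : ∀ a : A, π (tau z T) (ext v) (ext (Fin.snoc (fun i : Fin T => abar i) a))
      = π (tau z T) (ext v) (fun j => abar j) := by
    intro a
    refine hπ (tau z T) _ _ _ _ (fun i _ => rfl) (fun j hj => ?_)
    have hjT : j < T := lt_of_lt_of_le hj (tau_le z T)
    rw [ext_snoc_lt (fun i : Fin T => abar i) a hjT,
      ext_lt (fun i : Fin T => abar i) hjT]
  simp only [hind, hP, hq, one_mul]
  rw [← Finset.sum_mul, ← Finset.mul_sum, pmf_sum_eq_one, mul_one]

lemma eventProb_reduce {S A : Type*} [Fintype S] [Inhabited S] [Fintype A]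
    [DecidableEq A] [Inhabited A]
    (P : S → A → PMF S) (μ : PMF S) (M : ℕ) (hM : 1 ≤ M) (abar : ℕ → A)
    (z : ℕ → ℕ) (hz : ∀ i, z i ≤ M)
    (π : ℕ → (ℕ → S) → (ℕ → A) → PMF A) (hπ : IsCausal π)
    (E : (Fin (switchTime M z + 1) → S) → Prop) [DecidablePred E] :
    eventProb P μ abar π z (switchTime M z) (fun v _ => E v)
      = ∑ v : Fin (switchTime M z + 1) → S,
          if E v then μ (ext v 0) * ∏ k ∈ Finset.range (switchTime M z),
            P (ext v k) (abar k) (ext v (k+1)) else 0 := by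
  unfold eventProb
  refine Finset.sum_congr rfl fun v _ => ?_
  by_cases hE : E v
  · simp only [if_pos hE]
    exact sum_w P μ abar z π hπ (switchTime M z) (switch_lt hM z hz) (switch_nlt hM z) v
  · simp only [if_neg hE, Finset.sum_const_zero]

/-- Let `z` be a fixed delay sequence with switch time
`t_z = min {z 0, 1 + z 1, …, (M-1) + z (M-1)}`.  For every history-dependent
randomized policy `π`, every initial state `s0` with `μ s0 > 0`, and every `s : S`:
`P^π_z(s̃ t_z = s | s̃ 0 = s0) = ∑_{s_1,…,s_{t_z - 1}} ∏_{i<t_z} P s_i (abar i) s_{i+1}`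
(with `s_{t_z} := s`); in particular this conditional law does not depend on `π`. -/
theorem statement7 {S A : Type*} [Fintype S] [DecidableEq S] [Inhabited S]
    [Fintype A] [DecidableEq A] [Inhabited A]
    (P : S → A → PMF S) (μ : PMF S) (M : ℕ) (hM : 1 ≤ M) (abar : ℕ → A)
    (z : ℕ → ℕ) (hz : ∀ i, z i ≤ M)
    (π : ℕ → (ℕ → S) → (ℕ → A) → PMF A) (hπ : IsCausal π)
    (s0 : S) (hs0 : 0 < μ s0) (s : S) :
    eventProb P μ abar π z (switchTime M z)
        (fun v _ => v (Fin.last (switchTime M z)) = s ∧ v 0 = s0)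
      / eventProb P μ abar π z (switchTime M z) (fun v _ => v 0 = s0)
      = ∑ f : Fin (switchTime M z + 1) → S,
          if f 0 = s0 ∧ f (Fin.last (switchTime M z)) = s then
            ∏ i ∈ Finset.range (switchTime M z),
              P (ext f i) (abar i) (ext f (i + 1))
          else 0 := by
  have h0 : ∀ v : Fin (switchTime M z + 1) → S, ext v 0 = v 0 := by
    intro v
    rw [ext_lt v (Nat.succ_pos _)]
    congr 1
  have hnum := eventProb_reduce P μ M hM abar z hz π hπ
    (fun v => v (Fin.last (switchTime M z)) = s ∧ v 0 = s0)
  have hden := eventProb_reduce P μ M hM abar z hz π hπ (fun v => v 0 = s0)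
  rw [hnum, hden]
  have hdenval : (∑ v : Fin (switchTime M z + 1) → S,
      if v 0 = s0 then μ (ext v 0) * ∏ k ∈ Finset.range (switchTime M z),
        P (ext v k) (abar k) (ext v (k+1)) else 0) = μ s0 := by
    have e : ∀ v : Fin (switchTime M z + 1) → S,
        (if v 0 = s0 then μ (ext v 0) * ∏ k ∈ Finset.range (switchTime M z),
          P (ext v k) (abar k) (ext v (k+1)) else 0)
        = μ s0 * (if ext v 0 = s0 then ∏ k ∈ Finset.range (switchTime M z),
            P (ext v k) (abar k) (ext v (k+1)) else 0) := by
      intro v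
      by_cases h : v 0 = s0
      · rw [if_pos h, if_pos (by rw [h0 v, h]), h0 v, h]
      · rw [if_neg h, if_neg (by rw [h0 v]; exact h), mul_zero]
    rw [Finset.sum_congr rfl fun v _ => e v, ← Finset.mul_sum,
      sum_prod_ext (fun k s' => P s' (abar k)) (switchTime M z) s0, mul_one]
  have hnumval : (∑ v : Fin (switchTime M z + 1) → S,
      if v (Fin.last (switchTime M z)) = s ∧ v 0 = s0 then
        μ (ext v 0) * ∏ k ∈ Finset.range (switchTime M z),
          P (ext v k) (abar k) (ext v (k+1)) else 0)
      = μ s0 * ∑ f : Fin (switchTime M z + 1) → S,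
          if f 0 = s0 ∧ f (Fin.last (switchTime M z)) = s then
            ∏ i ∈ Finset.range (switchTime M z),
              P (ext f i) (abar i) (ext f (i + 1))
          else 0 := by
    rw [Finset.mul_sum]
    refine Finset.sum_congr rfl fun v _ => ?_
    by_cases h : v 0 = s0 ∧ v (Fin.last (switchTime M z)) = s
    · rw [if_pos ⟨h.2, h.1⟩, if_pos h, h0 v, h.1]
    · rw [if_neg (fun hc => h ⟨hc.2, hc.1⟩), if_neg h, mul_zero]
  rw [hnumval, hdenval]
  have hμ0 : μ s0 ≠ 0 := ne_of_gt hs0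
  have hμt : μ s0 ≠ ⊤ := PMF.apply_ne_top μ s0
  calc μ s0 * _ / (μ s0) = μ s0 * _ / (μ s0 * 1) := by rw [mul_one]
    _ = _ / 1 := ENNReal.mul_div_mul_left _ _ hμ0 hμt
    _ = _ := div_one _
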